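/- For every x ∈ X and every t > 0 one has the identity f_0(x) − f_t(x) = ∫₀ᵗ D⁺_s(x)² / (2 s²) ds, where the integrand coincides for all but countably many s with D⁻_s(x)²/(2s²). -/

import Mathlib

/-!
Setting: `(X, d)` is a complete length metric space, `f : X × X → ℝ` is lower
semicontinuous, bounded from below, and satisfies the reverse triangle inequality
`f(x,z) ≥ f(x,y) + f(y,z)`.  For `t > 0` set `F(t,x;y) := f(x,y) + d(x,y)²/(2t)`,
`f_t(x) := inf_y F(t,x;y)`, and `f_0(x) := f(x,x)`.  `D⁺_t(x)` (resp. `D⁻_t(x)`)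
is the largest (resp. smallest) value of `limsup_n d(x,y_n)` (resp. `liminf_n d(x,y_n)`)
among minimizing sequences `(y_n)` of `F(t,x;·)`.
-/

open Filter Topology Metric MeasureTheory
open scoped ENNReal NNReal

noncomputable section

/-- A metric space is a *length space* if the distance between any two points equals the
infimum of the lengths (total variations) of continuous curves joining them. -/
def IsLengthSpace (X : Type*) [MetricSpace X] : Prop :=
  ∀ x y : X,
    ENNReal.ofReal (dist x y) =
      ⨅ γ : { γ : ℝ → X // ContinuousOn γ (Set.Icc 0 1) ∧ γ 0 = x ∧ γ 1 = y },
        eVariationOn γ.1 (Set.Icc 0 1)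

variable {X : Type*} [MetricSpace X]

/-- `FH f t x y = f(x,y) + d(x,y)² / (2t)`. -/
def FH (f : X × X → ℝ) (t : ℝ) (x y : X) : ℝ :=
  f (x, y) + dist x y ^ 2 / (2 * t)

/-- `ft f t x = inf_y (f(x,y) + d(x,y)²/(2t))` for `t ≠ 0`, and `ft f 0 x = f(x,x)`. -/
def ft (f : X × X → ℝ) (t : ℝ) (x : X) : ℝ :=
  if t = 0 then f (x, x) else ⨅ y : X, FH f t x y

/-- `y : ℕ → X` is a minimizing sequence for `F(t,x;·)`. -/
def MinSeq (f : X × X → ℝ) (t : ℝ) (x : X) (y : ℕ → X) : Prop :=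
  Tendsto (fun n => FH f t x (y n)) atTop (𝓝 (ft f t x))

/-- `D⁺_t(x)`: the largest value of `limsup_n d(x, y_n)` among minimizing sequences. -/
def Dplus (f : X × X → ℝ) (t : ℝ) (x : X) : ℝ :=
  sSup { L : ℝ | ∃ y : ℕ → X, MinSeq f t x y ∧
    Filter.limsup (fun n => dist x (y n)) atTop = L }

/-- `D⁻_t(x)`: the smallest value of `liminf_n d(x, y_n)` among minimizing sequences. -/
def Dminus (f : X × X → ℝ) (t : ℝ) (x : X) : ℝ :=
  sInf { L : ℝ | ∃ y : ℕ → X, MinSeq f t x y ∧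
    Filter.liminf (fun n => dist x (y n)) atTop = L }

/-- Descending slope `|∂⁻ g|(x) = limsup_{y→x} (g(y) - g(x))⁻ / d(x,y)`, valued in `[0,∞]`. -/
def descSlope (g : X → ℝ) (x : X) : ℝ≥0∞ :=
  Filter.limsup (fun y => ENNReal.ofReal ((g x - g y) / dist x y)) (𝓝[≠] x)

/-- The tilt `tilt(f)(x) = limsup_{y→x} (f(x,y))⁻ / d(x,y)`, valued in `[0,∞]`. -/
def tilt (f : X × X → ℝ) (x : X) : ℝ≥0∞ :=
  Filter.limsup (fun y => ENNReal.ofReal ((-f (x, y)) / dist x y)) (𝓝[≠] x)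

section Basics

variable {f : X × X → ℝ} {C : ℝ} {t : ℝ}

lemma FH_ge (hC : ∀ p : X × X, C ≤ f p) (ht : 0 < t) (x : X) (y : X) : C ≤ FH f t x y := by
  have h1 : (0:ℝ) ≤ dist x y ^ 2 / (2 * t) :=
    div_nonneg (sq_nonneg _) (by linarith)
  have h2 := hC (x, y)
  unfold FH; linarith

lemma bdd_FH (hC : ∀ p : X × X, C ≤ f p) (ht : 0 < t) (x : X) : BddBelow (Set.range (FH f t x)) :=
  ⟨C, by rintro v ⟨y, rfl⟩; exact FH_ge hC ht x y⟩

lemma ft_eq (ht : 0 < t) (x : X) : ft f t x = ⨅ y : X, FH f t x y := if_neg (ne_of_gt ht)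

lemma ft_le (hC : ∀ p : X × X, C ≤ f p) (ht : 0 < t) (x : X) (y : X) : ft f t x ≤ FH f t x y := by
  rw [ft_eq ht x]
  exact ciInf_le (bdd_FH hC ht x) y

lemma C_le_ft [Nonempty X] (hC : ∀ p : X × X, C ≤ f p) (ht : 0 < t) (x : X) : C ≤ ft f t x := by
  rw [ft_eq ht x]
  exact le_ciInf fun y => FH_ge hC ht x y

lemma ft_le_diag (hC : ∀ p : X × X, C ≤ f p) (ht : 0 < t) (x : X) : ft f t x ≤ f (x, x) := by
  have := ft_le hC ht x x
  simpa [FH] using this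

lemma exists_minSeq [Nonempty X] (hC : ∀ p : X × X, C ≤ f p) (ht : 0 < t) (x : X) : ∃ y : ℕ → X, MinSeq f t x y := by
  have h : ∀ n : ℕ, ∃ y : X, FH f t x y < ft f t x + 1 / (n + 1) := by
    intro n
    have hlt : ft f t x < ft f t x + 1 / (n + 1 : ℝ) := by
      have : (0:ℝ) < 1 / (n + 1) := by positivity
      linarith
    rw [ft_eq ht x] at hlt ⊢
    exact exists_lt_of_ciInf_lt hlt
  choose y hy using h
  refine ⟨y, ?_⟩
  have hub : ∀ n : ℕ, FH f t x (y n) ≤ ft f t x + 1 / (n + 1) := fun n => (hy n).le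
  have hlb : ∀ n : ℕ, ft f t x ≤ FH f t x (y n) := fun n => ft_le hC ht x _
  have h1 : Tendsto (fun n : ℕ => ft f t x + 1 / (n + 1 : ℝ)) atTop (𝓝 (ft f t x)) := by
    have := tendsto_one_div_add_atTop_nhds_zero_nat (𝕜 := ℝ)
    simpa using tendsto_const_nhds.add this
  exact tendsto_of_tendsto_of_tendsto_of_le_of_le tendsto_const_nhds h1 hlb hub

end Basics

section Subseq

/-- bounded-above-eventually, bounded-below sequences admit subsequences tending to liminf -/
lemma exists_subseq_tendsto_liminf {u : ℕ → ℝ} {M : ℝ}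
    (hub : ∀ᶠ n in atTop, u n ≤ M) (hlb : ∀ n, 0 ≤ u n) :
    ∃ φ : ℕ → ℕ, StrictMono φ ∧ Tendsto (u ∘ φ) atTop (𝓝 (Filter.liminf u atTop)) := by
  set L := Filter.liminf u atTop with hL
  have hbdd : IsBoundedUnder (· ≤ ·) atTop u := ⟨M, hub⟩
  have hbdd' : IsBoundedUnder (· ≥ ·) atTop u := isBoundedUnder_of ⟨0, fun n => hlb n⟩
  have hco : IsCoboundedUnder (· ≥ ·) atTop u := hbdd.isCoboundedUnder_ge
  have hP : ∀ k : ℕ, ∃ᶠ n in atTop, L - 1 / (k + 1) < u n ∧ u n < L + 1 / (k + 1) := by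
    intro k
    have h1 : ∃ᶠ n in atTop, u n < L + 1 / (k + 1) := by
      apply frequently_lt_of_liminf_lt hco
      have : (0:ℝ) < 1 / (k + 1) := by positivity
      linarith
    have h2 : ∀ᶠ n in atTop, L - 1 / (k + 1) < u n := by
      apply eventually_lt_of_lt_liminf _ hbdd'
      have : (0:ℝ) < 1 / (k + 1) := by positivity
      linarith
    exact h1.and_eventually h2 |>.mono fun n hn => ⟨hn.2, hn.1⟩
  obtain ⟨φ, hφ, hφP⟩ := Filter.extraction_forall_of_frequently hP
  refine ⟨φ, hφ, ?_⟩
  have hlow : ∀ k : ℕ, L - 1 / (k + 1) ≤ (u ∘ φ) k := fun k => (hφP k).1.le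
  have hhigh : ∀ k : ℕ, (u ∘ φ) k ≤ L + 1 / (k + 1) := fun k => (hφP k).2.le
  have h0 : Tendsto (fun k : ℕ => 1 / (k + 1 : ℝ)) atTop (𝓝 0) :=
    tendsto_one_div_add_atTop_nhds_zero_nat
  have h1 : Tendsto (fun k : ℕ => L - 1 / (k + 1 : ℝ)) atTop (𝓝 L) := by
    simpa using tendsto_const_nhds.sub h0
  have h2 : Tendsto (fun k : ℕ => L + 1 / (k + 1 : ℝ)) atTop (𝓝 L) := by
    simpa using tendsto_const_nhds.add h0
  exact tendsto_of_tendsto_of_tendsto_of_le_of_le h1 h2 hlow hhigh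

lemma exists_subseq_tendsto_limsup {u : ℕ → ℝ} {M : ℝ}
    (hub : ∀ᶠ n in atTop, u n ≤ M) (hlb : ∀ n, 0 ≤ u n) :
    ∃ φ : ℕ → ℕ, StrictMono φ ∧ Tendsto (u ∘ φ) atTop (𝓝 (Filter.limsup u atTop)) := by
  set L := Filter.limsup u atTop with hL
  have hbdd : IsBoundedUnder (· ≤ ·) atTop u := ⟨M, hub⟩
  have hbdd' : IsBoundedUnder (· ≥ ·) atTop u := isBoundedUnder_of ⟨0, fun n => hlb n⟩
  have hco : IsCoboundedUnder (· ≤ ·) atTop u := hbdd'.isCoboundedUnder_le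
  have hP : ∀ k : ℕ, ∃ᶠ n in atTop, L - 1 / (k + 1) < u n ∧ u n < L + 1 / (k + 1) := by
    intro k
    have h1 : ∃ᶠ n in atTop, L - 1 / (k + 1) < u n := by
      apply frequently_lt_of_lt_limsup hco
      have : (0:ℝ) < 1 / (k + 1) := by positivity
      linarith
    have h2 : ∀ᶠ n in atTop, u n < L + 1 / (k + 1) := by
      apply eventually_lt_of_limsup_lt _ hbdd
      have : (0:ℝ) < 1 / (k + 1) := by positivity
      linarith
    exact h1.and_eventually h2
  obtain ⟨φ, hφ, hφP⟩ := Filter.extraction_forall_of_frequently hP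
  refine ⟨φ, hφ, ?_⟩
  have hlow : ∀ k : ℕ, L - 1 / (k + 1) ≤ (u ∘ φ) k := fun k => (hφP k).1.le
  have hhigh : ∀ k : ℕ, (u ∘ φ) k ≤ L + 1 / (k + 1) := fun k => (hφP k).2.le
  have h0 : Tendsto (fun k : ℕ => 1 / (k + 1 : ℝ)) atTop (𝓝 0) :=
    tendsto_one_div_add_atTop_nhds_zero_nat
  have h1 : Tendsto (fun k : ℕ => L - 1 / (k + 1 : ℝ)) atTop (𝓝 L) := by
    simpa using tendsto_const_nhds.sub h0
  have h2 : Tendsto (fun k : ℕ => L + 1 / (k + 1 : ℝ)) atTop (𝓝 L) := by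
    simpa using tendsto_const_nhds.add h0
  exact tendsto_of_tendsto_of_tendsto_of_le_of_le h1 h2 hlow hhigh

end Subseq

section DistBound

variable {f : X × X → ℝ} {C : ℝ} {t : ℝ}

/-- eventual distance bound along a minimizing sequence -/
lemma minSeq_dist_ev [Nonempty X] (hC : ∀ p : X × X, C ≤ f p) (ht : 0 < t) (x : X) {y : ℕ → X}
    (hy : MinSeq f t x y) :
    ∀ᶠ n in atTop, dist x (y n) ≤ Real.sqrt (2 * t * (ft f t x + 1 - C)) := by
  have hev : ∀ᶠ n in atTop, FH f t x (y n) ≤ ft f t x + 1 := by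
    have : ∀ᶠ v in 𝓝 (ft f t x), v ≤ ft f t x + 1 :=
      eventually_le_nhds (lt_add_one _)
    exact hy.eventually this
  filter_upwards [hev] with n hn
  have hft : C ≤ ft f t x := C_le_ft hC ht x
  have hKnn : 0 ≤ 2 * t * (ft f t x + 1 - C) := by nlinarith
  rw [Real.le_sqrt dist_nonneg hKnn]
  have hfy := hC (x, y n)
  unfold FH at hn
  have h3 : dist x (y n) ^ 2 / (2 * t) ≤ ft f t x + 1 - C := by linarith
  have h2t : (0:ℝ) < 2 * t := by linarith
  calc dist x (y n) ^ 2 = dist x (y n) ^ 2 / (2 * t) * (2 * t) := by field_simp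
    _ ≤ (ft f t x + 1 - C) * (2 * t) := by nlinarith
    _ = 2 * t * (ft f t x + 1 - C) := by ring

end DistBound

section DSets

variable {f : X × X → ℝ} {C : ℝ}

def SP (f : X × X → ℝ) (t : ℝ) (x : X) : Set ℝ :=
  { L : ℝ | ∃ y : ℕ → X, MinSeq f t x y ∧
    Filter.limsup (fun n => dist x (y n)) atTop = L }

def SM (f : X × X → ℝ) (t : ℝ) (x : X) : Set ℝ :=
  { L : ℝ | ∃ y : ℕ → X, MinSeq f t x y ∧
    Filter.liminf (fun n => dist x (y n)) atTop = L }

lemma Dplus_def (f : X × X → ℝ) (t : ℝ) (x : X) : Dplus f t x = sSup (SP f t x) := rfl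
lemma Dminus_def (f : X × X → ℝ) (t : ℝ) (x : X) : Dminus f t x = sInf (SM f t x) := rfl

variable {t : ℝ} [Nonempty X]

lemma SP_nonempty (hC : ∀ p : X × X, C ≤ f p) (ht : 0 < t) (x : X) : (SP f t x).Nonempty := by
  obtain ⟨y, hy⟩ := exists_minSeq hC ht x
  exact ⟨_, y, hy, rfl⟩

lemma SM_nonempty (hC : ∀ p : X × X, C ≤ f p) (ht : 0 < t) (x : X) : (SM f t x).Nonempty := by
  obtain ⟨y, hy⟩ := exists_minSeq hC ht x
  exact ⟨_, y, hy, rfl⟩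

/-- Every element of `SP` is a limit of distances along a subsequence of a minimizing
sequence; in particular it lies in `[0, R]`. -/
lemma SP_elim (hC : ∀ p : X × X, C ≤ f p) (ht : 0 < t) (x : X) {L : ℝ} (hL : L ∈ SP f t x) :
    ∃ z : ℕ → X, MinSeq f t x z ∧ Tendsto (fun n => dist x (z n)) atTop (𝓝 L) := by
  obtain ⟨y, hy, hlim⟩ := hL
  obtain ⟨φ, hφ, hconv⟩ := exists_subseq_tendsto_limsup (minSeq_dist_ev hC ht x hy)
    (fun n => dist_nonneg)
  refine ⟨y ∘ φ, hy.comp (hφ.tendsto_atTop), by simpa [hlim, Function.comp_def] using hconv⟩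

lemma SM_elim (hC : ∀ p : X × X, C ≤ f p) (ht : 0 < t) (x : X) {L : ℝ} (hL : L ∈ SM f t x) :
    ∃ z : ℕ → X, MinSeq f t x z ∧ Tendsto (fun n => dist x (z n)) atTop (𝓝 L) := by
  obtain ⟨y, hy, hlim⟩ := hL
  obtain ⟨φ, hφ, hconv⟩ := exists_subseq_tendsto_liminf (minSeq_dist_ev hC ht x hy)
    (fun n => dist_nonneg)
  refine ⟨y ∘ φ, hy.comp (hφ.tendsto_atTop), by simpa [hlim, Function.comp_def] using hconv⟩

lemma SP_bounds (hC : ∀ p : X × X, C ≤ f p) (ht : 0 < t) (x : X) {L : ℝ} (hL : L ∈ SP f t x) :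
    0 ≤ L ∧ L ≤ Real.sqrt (2 * t * (ft f t x + 1 - C)) := by
  obtain ⟨z, hz, hconv⟩ := SP_elim hC ht x hL
  constructor
  · exact ge_of_tendsto hconv (Filter.Eventually.of_forall fun n => dist_nonneg)
  · exact le_of_tendsto hconv (minSeq_dist_ev hC ht x hz)

lemma SM_bounds (hC : ∀ p : X × X, C ≤ f p) (ht : 0 < t) (x : X) {L : ℝ} (hL : L ∈ SM f t x) :
    0 ≤ L ∧ L ≤ Real.sqrt (2 * t * (ft f t x + 1 - C)) := by
  obtain ⟨z, hz, hconv⟩ := SM_elim hC ht x hL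
  constructor
  · exact ge_of_tendsto hconv (Filter.Eventually.of_forall fun n => dist_nonneg)
  · exact le_of_tendsto hconv (minSeq_dist_ev hC ht x hz)

lemma SP_bddAbove (hC : ∀ p : X × X, C ≤ f p) (ht : 0 < t) (x : X) : BddAbove (SP f t x) :=
  ⟨_, fun _ hL => (SP_bounds hC ht x hL).2⟩

lemma SM_bddBelow (hC : ∀ p : X × X, C ≤ f p) (ht : 0 < t) (x : X) : BddBelow (SM f t x) :=
  ⟨0, fun _ hL => (SM_bounds hC ht x hL).1⟩

lemma Dplus_nonneg (hC : ∀ p : X × X, C ≤ f p) (ht : 0 < t) (x : X) : 0 ≤ Dplus f t x := by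
  obtain ⟨L, hL⟩ := SP_nonempty hC ht x
  exact le_trans (SP_bounds hC ht x hL).1 (le_csSup (SP_bddAbove hC ht x) hL)

lemma Dminus_nonneg (hC : ∀ p : X × X, C ≤ f p) (ht : 0 < t) (x : X) : 0 ≤ Dminus f t x :=
  le_csInf (SM_nonempty hC ht x) fun _ hL => (SM_bounds hC ht x hL).1

lemma Dminus_le_Dplus (hC : ∀ p : X × X, C ≤ f p) (ht : 0 < t) (x : X) :
    Dminus f t x ≤ Dplus f t x := by
  obtain ⟨y, hy⟩ := exists_minSeq hC ht x
  have hub := minSeq_dist_ev hC ht x hy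
  have h1 : Filter.liminf (fun n => dist x (y n)) atTop ∈ SM f t x := ⟨y, hy, rfl⟩
  have h2 : Filter.limsup (fun n => dist x (y n)) atTop ∈ SP f t x := ⟨y, hy, rfl⟩
  have h3 : Filter.liminf (fun n => dist x (y n)) atTop ≤
      Filter.limsup (fun n => dist x (y n)) atTop :=
    liminf_le_limsup ⟨_, eventually_map.2 hub⟩
      (isBoundedUnder_of ⟨0, fun n => dist_nonneg⟩)
  exact le_trans (csInf_le (SM_bddBelow hC ht x) h1)
    (le_trans h3 (le_csSup (SP_bddAbove hC ht x) h2))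

/-- The core comparison: along a minimizing sequence at `b` whose distances converge to `ℓ`,
`f_a(x) ≤ f_b(x) + (1/(2a) - 1/(2b)) ℓ²`. -/
lemma ft_core (hC : ∀ p : X × X, C ≤ f p) {a b : ℝ} (ha : 0 < a) (hb : 0 < b) (x : X)
    {y : ℕ → X} (hy : MinSeq f b x y) {ℓ : ℝ}
    (hconv : Tendsto (fun n => dist x (y n)) atTop (𝓝 ℓ)) :
    ft f a x ≤ ft f b x + (1 / (2 * a) - 1 / (2 * b)) * ℓ ^ 2 := by
  have key : ∀ n, ft f a x ≤
      FH f b x (y n) + (1 / (2 * a) - 1 / (2 * b)) * dist x (y n) ^ 2 := by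
    intro n
    have h1 := ft_le hC ha x (y n)
    have heq : FH f a x (y n) =
        FH f b x (y n) + (1 / (2 * a) - 1 / (2 * b)) * dist x (y n) ^ 2 := by
      unfold FH
      field_simp
      ring
    linarith [heq ▸ h1]
  have htend : Tendsto
      (fun n => FH f b x (y n) + (1 / (2 * a) - 1 / (2 * b)) * dist x (y n) ^ 2) atTop
      (𝓝 (ft f b x + (1 / (2 * a) - 1 / (2 * b)) * ℓ ^ 2)) :=
    hy.add (tendsto_const_nhds.mul (hconv.pow 2))
  exact ge_of_tendsto htend (Filter.Eventually.of_forall key)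

end DSets

section Compare

variable {f : X × X → ℝ} {C : ℝ} [Nonempty X]

omit [Nonempty X] in
lemma ft_anti (hC : ∀ p : X × X, C ≤ f p) {a b : ℝ} (ha : 0 < a) (hab : a ≤ b) (x : X) :
    ft f b x ≤ ft f a x := by
  have hb : 0 < b := lt_of_lt_of_le ha hab
  rw [ft_eq ha x, ft_eq hb x]
  refine ciInf_mono (bdd_FH hC hb x) fun y => ?_
  unfold FH
  have h1 : dist x y ^ 2 / (2 * b) ≤ dist x y ^ 2 / (2 * a) :=
    div_le_div_of_nonneg_left (sq_nonneg _) (by linarith) (by linarith)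
  linarith

/-- (E): upper bound for the increment via `Dminus` at the right endpoint. -/
lemma ft_sub_le (hC : ∀ p : X × X, C ≤ f p) {a b : ℝ} (ha : 0 < a) (hab : a ≤ b) (x : X) :
    ft f a x - ft f b x ≤ (1 / (2 * a) - 1 / (2 * b)) * Dminus f b x ^ 2 := by
  have hb : 0 < b := lt_of_lt_of_le ha hab
  have hc0 : 0 ≤ 1 / (2 * a) - 1 / (2 * b) := by
    have : 1 / (2 * b) ≤ 1 / (2 * a) := by
      apply one_div_le_one_div_of_le <;> linarith
    linarith
  have hD0 : 0 ≤ Dminus f b x := Dminus_nonneg hC hb x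
  have claim : ∀ ε : ℝ, 0 < ε →
      ft f a x ≤ ft f b x + (1 / (2 * a) - 1 / (2 * b)) * (Dminus f b x + ε) ^ 2 := by
    intro ε hε
    obtain ⟨L, hLmem, hLlt⟩ : ∃ L ∈ SM f b x, L < Dminus f b x + ε := by
      apply exists_lt_of_csInf_lt (SM_nonempty hC hb x)
      rw [← Dminus_def]; linarith
    obtain ⟨z, hz, hconv⟩ := SM_elim hC hb x hLmem
    have hL0 : 0 ≤ L := (SM_bounds hC hb x hLmem).1
    have hcore := ft_core hC ha hb x hz hconv
    have hL2 : L ^ 2 ≤ (Dminus f b x + ε) ^ 2 := pow_le_pow_left₀ hL0 hLlt.le 2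
    nlinarith
  have htend : Tendsto
      (fun n : ℕ => ft f b x + (1 / (2 * a) - 1 / (2 * b)) * (Dminus f b x + 1 / (n + 1)) ^ 2)
      atTop (𝓝 (ft f b x + (1 / (2 * a) - 1 / (2 * b)) * (Dminus f b x + 0) ^ 2)) := by
    have h1 : Tendsto (fun n : ℕ => Dminus f b x + 1 / (n + 1 : ℝ)) atTop
        (𝓝 (Dminus f b x + 0)) :=
      tendsto_const_nhds.add tendsto_one_div_add_atTop_nhds_zero_nat
    exact tendsto_const_nhds.add (tendsto_const_nhds.mul (h1.pow 2))
  have := ge_of_tendsto htend (Filter.Eventually.of_forall fun n =>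
    claim (1 / (n + 1)) (by positivity))
  simp only [add_zero] at this
  linarith

/-- (F): lower bound for the increment via `Dplus` at the left endpoint. -/
lemma le_ft_sub (hC : ∀ p : X × X, C ≤ f p) {a b : ℝ} (ha : 0 < a) (hab : a ≤ b) (x : X) :
    (1 / (2 * a) - 1 / (2 * b)) * Dplus f a x ^ 2 ≤ ft f a x - ft f b x := by
  have hb : 0 < b := lt_of_lt_of_le ha hab
  have hc0 : 0 ≤ 1 / (2 * a) - 1 / (2 * b) := by
    have : 1 / (2 * b) ≤ 1 / (2 * a) := by
      apply one_div_le_one_div_of_le <;> linarith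
    linarith
  have hD0 : 0 ≤ Dplus f a x := Dplus_nonneg hC ha x
  have claim : ∀ ε : ℝ, 0 < ε →
      (1 / (2 * a) - 1 / (2 * b)) * Dplus f a x ^ 2 ≤ ft f a x - ft f b x +
        (1 / (2 * a) - 1 / (2 * b)) *
          ((2 * Real.sqrt (2 * a * (ft f a x + 1 - C)) + ε) * ε) := by
    intro ε hε
    obtain ⟨L, hLmem, hLlt⟩ : ∃ L ∈ SP f a x, Dplus f a x - ε < L := by
      apply exists_lt_of_lt_csSup (SP_nonempty hC ha x)
      rw [← Dplus_def]; linarith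
    obtain ⟨z, hz, hconv⟩ := SP_elim hC ha x hLmem
    obtain ⟨hL0, hLR⟩ := SP_bounds hC ha x hLmem
    have hcore := ft_core hC hb ha x hz hconv
    have hcL : (1 / (2 * a) - 1 / (2 * b)) * L ^ 2 ≤ ft f a x - ft f b x := by
      nlinarith
    have hsq : Dplus f a x ^ 2 ≤ (L + ε) ^ 2 :=
      pow_le_pow_left₀ hD0 (by linarith) 2
    nlinarith [mul_le_mul_of_nonneg_left hsq hc0,
      mul_le_mul_of_nonneg_left (mul_le_mul_of_nonneg_right
        (by linarith : 2 * L + ε ≤ 2 * Real.sqrt (2 * a * (ft f a x + 1 - C)) + ε) hε.le) hc0]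
  have htend : Tendsto
      (fun n : ℕ => ft f a x - ft f b x + (1 / (2 * a) - 1 / (2 * b)) *
        ((2 * Real.sqrt (2 * a * (ft f a x + 1 - C)) + 1 / (n + 1)) * (1 / (n + 1)))) atTop
      (𝓝 (ft f a x - ft f b x + (1 / (2 * a) - 1 / (2 * b)) *
        ((2 * Real.sqrt (2 * a * (ft f a x + 1 - C)) + 0) * 0))) := by
    have h0 : Tendsto (fun n : ℕ => 1 / (n + 1 : ℝ)) atTop (𝓝 0) :=
      tendsto_one_div_add_atTop_nhds_zero_nat
    exact tendsto_const_nhds.add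
      (tendsto_const_nhds.mul ((tendsto_const_nhds.add h0).mul h0))
  have := ge_of_tendsto htend (Filter.Eventually.of_forall fun n =>
    claim (1 / (n + 1)) (by positivity))
  simp only [mul_zero, add_zero] at this
  linarith

lemma Dplus_le_Dminus (hC : ∀ p : X × X, C ≤ f p) {a b : ℝ} (ha : 0 < a) (hab : a < b)
    (x : X) : Dplus f a x ≤ Dminus f b x := by
  have hb : 0 < b := ha.trans hab
  have hc : 0 < 1 / (2 * a) - 1 / (2 * b) := by
    have : 1 / (2 * b) < 1 / (2 * a) := by
      apply one_div_lt_one_div_of_lt <;> linarith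
    linarith
  have h1 := le_ft_sub hC ha hab.le x
  have h2 := ft_sub_le hC ha hab.le x
  have hsq : Dplus f a x ^ 2 ≤ Dminus f b x ^ 2 :=
    le_of_mul_le_mul_left (by linarith) hc
  exact le_of_pow_le_pow_left₀ two_ne_zero (Dminus_nonneg hC hb x) hsq

lemma Dplus_mono (hC : ∀ p : X × X, C ≤ f p) {a b : ℝ} (ha : 0 < a) (hab : a ≤ b) (x : X) :
    Dplus f a x ≤ Dplus f b x := by
  rcases eq_or_lt_of_le hab with rfl | h
  · exact le_rfl
  · exact le_trans (Dplus_le_Dminus hC ha h x)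
      (Dminus_le_Dplus hC (ha.trans h) x)

end Compare

section ZeroLimit

variable {f : X × X → ℝ} {C : ℝ} [Nonempty X]

lemma ft_lower_near_zero (hC : ∀ p : X × X, C ≤ f p) (hlsc : LowerSemicontinuous f) (x : X)
    {ε : ℝ} (hε : 0 < ε) :
    ∃ δ > 0, ∀ s : ℝ, 0 < s → s < δ → f (x, x) - ε < ft f s x := by
  have hlsc' := hlsc (x, x) (f (x, x) - ε / 2) (by linarith)
  rw [Metric.eventually_nhds_iff] at hlsc'
  obtain ⟨r, hr, hball⟩ := hlsc'
  have hM : (0:ℝ) < f (x, x) + 1 - C := by have := hC (x, x); linarith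
  set δ := min (min 1 (ε / 2)) (r ^ 2 / (4 * (f (x, x) + 1 - C))) with hδdef
  have hδpos : 0 < δ := by
    apply lt_min (lt_min one_pos (by linarith))
    positivity
  refine ⟨δ, hδpos, fun s hs hsδ => ?_⟩
  have hs1 : s ≤ 1 := le_of_lt (lt_of_lt_of_le hsδ (le_trans (min_le_left _ _) (min_le_left _ _)))
  have hsε : s ≤ ε / 2 := le_of_lt (lt_of_lt_of_le hsδ
    (le_trans (min_le_left _ _) (min_le_right _ _)))
  have hsr : s < r ^ 2 / (4 * (f (x, x) + 1 - C)) := lt_of_lt_of_le hsδ (min_le_right _ _)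
  -- take a near-minimizer
  obtain ⟨z, hz⟩ : ∃ z : X, FH f s x z < ft f s x + s := by
    have hlt : ft f s x < ft f s x + s := by linarith
    rw [ft_eq hs x] at hlt ⊢
    exact exists_lt_of_ciInf_lt hlt
  have hub : ft f s x ≤ f (x, x) := ft_le_diag hC hs x
  have hfz := hC (x, z)
  have h2s : (0:ℝ) < 2 * s := by linarith
  have hd2 : dist x z ^ 2 ≤ 2 * s * (f (x, x) + s - C) := by
    unfold FH at hz
    have h3 : dist x z ^ 2 / (2 * s) ≤ f (x, x) + s - C := by linarith
    calc dist x z ^ 2 = dist x z ^ 2 / (2 * s) * (2 * s) := by field_simp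
      _ ≤ (f (x, x) + s - C) * (2 * s) := by nlinarith
      _ = 2 * s * (f (x, x) + s - C) := by ring
  have hdr : dist x z < r := by
    have h4 : 2 * s * (f (x, x) + s - C) < r ^ 2 := by
      have h5 : f (x, x) + s - C ≤ f (x, x) + 1 - C := by linarith
      calc 2 * s * (f (x, x) + s - C) ≤ 2 * s * (f (x, x) + 1 - C) := by nlinarith
        _ < 2 * (r ^ 2 / (4 * (f (x, x) + 1 - C))) * (f (x, x) + 1 - C) := by
            apply mul_lt_mul_of_pos_right _ hM
            linarith
        _ = r ^ 2 / 2 := by field_simp; ring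
        _ < r ^ 2 := by nlinarith
    have := lt_of_pow_lt_pow_left₀ 2 hr.le (lt_of_le_of_lt hd2 h4)
    exact this
  have hnear : f (x, x) - ε / 2 < f (x, z) := by
    apply hball
    rw [Prod.dist_eq]
    simp only [dist_self]
    simpa [max_eq_right dist_nonneg, dist_comm] using hdr
  have hpen : (0:ℝ) ≤ dist x z ^ 2 / (2 * s) := div_nonneg (sq_nonneg _) (by linarith)
  unfold FH at hz
  linarith

lemma ft_tendsto_zero (hC : ∀ p : X × X, C ≤ f p) (hlsc : LowerSemicontinuous f) (x : X)
    {a : ℕ → ℝ} (hapos : ∀ n, 0 < a n) (ha0 : Tendsto a atTop (𝓝 0)) :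
    Tendsto (fun n => ft f (a n) x) atTop (𝓝 (f (x, x))) := by
  rw [Metric.tendsto_atTop]
  intro ε hε
  obtain ⟨δ, hδ, hlow⟩ := ft_lower_near_zero hC hlsc x (half_pos hε)
  have hev : ∀ᶠ n in atTop, a n < δ :=
    (ha0.eventually (eventually_lt_nhds hδ)).mono fun n h => by simpa using h
  rw [Filter.eventually_atTop] at hev
  obtain ⟨N, hN⟩ := hev
  refine ⟨N, fun n hn => ?_⟩
  have h1 := hlow (a n) (hapos n) (hN n hn)
  have h2 := ft_le_diag hC (hapos n) x
  rw [Real.dist_eq, abs_lt]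
  constructor <;> linarith

end ZeroLimit

section IntegralPrep

variable {f : X × X → ℝ} {C : ℝ} [Nonempty X]

lemma Dext_monotone (hC : ∀ p : X × X, C ≤ f p) (x : X) {a : ℝ} (ha : 0 < a) :
    Monotone (fun s : ℝ => Dplus f (max s a) x) := by
  intro s s' hss'
  exact Dplus_mono hC (lt_max_of_lt_right ha) (max_le_max hss' le_rfl) x

lemma integrand_nonneg (x : X) (s : ℝ) : 0 ≤ Dplus f s x ^ 2 / (2 * s ^ 2) :=
  div_nonneg (sq_nonneg _) (by positivity)

lemma aux_measurable (hC : ∀ p : X × X, C ≤ f p) (x : X) {a : ℝ} (ha : 0 < a) :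
    Measurable (fun s : ℝ => Dplus f (max s a) x ^ 2 / (2 * s ^ 2)) := by
  have h1 : Measurable (fun s : ℝ => Dplus f (max s a) x) :=
    (Dext_monotone hC x ha).measurable
  exact (h1.pow_const 2).div ((measurable_const.mul ((measurable_id).pow_const 2)))

lemma integrableOn_integrand (hC : ∀ p : X × X, C ≤ f p) (x : X) {a b : ℝ} (ha : 0 < a)
    (hab : a ≤ b) :
    IntegrableOn (fun s : ℝ => Dplus f s x ^ 2 / (2 * s ^ 2)) (Set.Ioc a b) volume := by
  have hb : 0 < b := lt_of_lt_of_le ha hab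
  have heq : Set.EqOn (fun s : ℝ => Dplus f (max s a) x ^ 2 / (2 * s ^ 2))
      (fun s : ℝ => Dplus f s x ^ 2 / (2 * s ^ 2)) (Set.Ioc a b) := by
    intro s hs
    simp only [max_eq_left hs.1.le]
  apply IntegrableOn.congr_fun _ heq measurableSet_Ioc
  apply Integrable.mono' (g := fun _ : ℝ => Dplus f b x ^ 2 / (2 * a ^ 2))
  · exact integrableOn_const measure_Ioc_lt_top.ne
  · exact ((aux_measurable hC x ha).aestronglyMeasurable).restrict
  · refine (ae_restrict_iff' measurableSet_Ioc).2 (Filter.Eventually.of_forall fun s hs => ?_)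
    have hs0 : 0 < s := ha.trans hs.1
    have hmax : max s a = s := max_eq_left hs.1.le
    have hnum : Dplus f (max s a) x ^ 2 ≤ Dplus f b x ^ 2 := by
      have h0 : 0 ≤ Dplus f (max s a) x := by
        rw [hmax]; exact Dplus_nonneg hC hs0 x
      have hle : Dplus f (max s a) x ≤ Dplus f b x := by
        rw [hmax]; exact Dplus_mono hC hs0 hs.2 x
      exact pow_le_pow_left₀ h0 hle 2
    have hden : 2 * a ^ 2 ≤ 2 * s ^ 2 := by
      have := pow_le_pow_left₀ ha.le hs.1.le 2
      linarith
    rw [Real.norm_eq_abs, abs_of_nonneg (div_nonneg (sq_nonneg _) (by positivity))]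
    exact div_le_div₀ (sq_nonneg _) hnum (by positivity) hden

lemma intervalIntegrable_integrand (hC : ∀ p : X × X, C ≤ f p) (x : X) {a b : ℝ} (ha : 0 < a)
    (hab : a ≤ b) :
    IntervalIntegrable (fun s : ℝ => Dplus f s x ^ 2 / (2 * s ^ 2)) volume a b :=
  (intervalIntegrable_iff_integrableOn_Ioc_of_le hab).2 (integrableOn_integrand hC x ha hab)

omit [Nonempty X] in
/-- FTC computation: `∫_p^q K/(2s²) ds = K (1/(2p) - 1/(2q))`. -/
lemma integral_const_div_sq {p q K : ℝ} (hp : 0 < p) (hpq : p ≤ q) :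
    ∫ s in p..q, K / (2 * s ^ 2) = K * (1 / (2 * p) - 1 / (2 * q)) := by
  have hq : 0 < q := lt_of_lt_of_le hp hpq
  have hderiv : ∀ s ∈ Set.uIcc p q, HasDerivAt (fun u : ℝ => -(K / 2) * u⁻¹)
      (K / (2 * s ^ 2)) s := by
    intro s hs
    rw [Set.uIcc_of_le hpq] at hs
    have hs0 : s ≠ 0 := ne_of_gt (lt_of_lt_of_le hp hs.1)
    have h := (hasDerivAt_inv hs0).const_mul (-(K / 2))
    refine h.congr_deriv ?_
    ring
  have hcont : IntervalIntegrable (fun s : ℝ => K / (2 * s ^ 2)) volume p q := by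
    apply ContinuousOn.intervalIntegrable
    apply ContinuousOn.div continuousOn_const
    · fun_prop
    · intro s hs
      rw [Set.uIcc_of_le hpq] at hs
      have : 0 < s := lt_of_lt_of_le hp hs.1
      positivity
  rw [intervalIntegral.integral_eq_sub_of_hasDerivAt hderiv hcont]
  field_simp
  ring

end IntegralPrep

section Partition

variable {f : X × X → ℝ} {C : ℝ} [Nonempty X]

omit [Nonempty X] in
lemma intervalIntegrable_const_div_sq {p q K : ℝ} (hp : 0 < p) (hpq : p ≤ q) :
    IntervalIntegrable (fun s : ℝ => K / (2 * s ^ 2)) volume p q := by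
  apply ContinuousOn.intervalIntegrable
  apply ContinuousOn.div continuousOn_const
  · fun_prop
  · intro s hs
    rw [Set.uIcc_of_le hpq] at hs
    have : 0 < s := lt_of_lt_of_le hp hs.1
    positivity

lemma ft_diff_eq_integral (hC : ∀ p : X × X, C ≤ f p) (x : X) {a b : ℝ}
    (ha : 0 < a) (hab : a < b) :
    ft f a x - ft f b x = ∫ s in a..b, Dplus f s x ^ 2 / (2 * s ^ 2) := by
  have hb : 0 < b := ha.trans hab
  set I := ∫ s in a..b, Dplus f s x ^ 2 / (2 * s ^ 2) with hI
  suffices h : ∀ ε : ℝ, 0 < ε → |ft f a x - ft f b x - I| ≤ ε by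
    by_contra hne
    have habs : 0 < |ft f a x - ft f b x - I| := abs_pos.2 (sub_ne_zero.2 hne)
    have := h (|ft f a x - ft f b x - I| / 2) (by linarith)
    linarith
  intro ε hε
  set K := Dplus f b x ^ 2 - Dplus f a x ^ 2 with hK
  have hK0 : 0 ≤ K := by
    have h1 := Dplus_mono hC ha hab.le x
    have h0 := Dplus_nonneg hC ha x
    nlinarith
  obtain ⟨N, hN⟩ := exists_nat_gt ((b - a) * K / (2 * a ^ 2 * ε))
  have hNpos : 0 < (N:ℝ) := lt_of_le_of_lt
    (div_nonneg (mul_nonneg (by linarith) hK0) (by positivity)) hN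
  have hNne : (N:ℝ) ≠ 0 := ne_of_gt hNpos
  set Δ : ℝ := (b - a) / N with hΔdef
  have hΔ : 0 < Δ := by apply div_pos <;> [linarith; exact hNpos]
  set p : ℕ → ℝ := fun i => a + i * Δ with hpdef
  have hp0 : p 0 = a := by simp [hpdef]
  have hpN : p N = b := by
    simp only [hpdef, hΔdef]
    field_simp
    ring
  have hstep : ∀ i : ℕ, p (i + 1) - p i = Δ := by
    intro i; simp only [hpdef]; push_cast; ring
  have hmono : ∀ i : ℕ, p i < p (i + 1) := by
    intro i; have := hstep i; linarith
  have hage : ∀ i : ℕ, a ≤ p i := by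
    intro i
    have : (0:ℝ) ≤ i * Δ := by positivity
    simp only [hpdef]; linarith
  have hppos : ∀ i : ℕ, 0 < p i := fun i => lt_of_lt_of_le ha (hage i)
  have hble : ∀ i : ℕ, i ≤ N → p i ≤ b := by
    intro i hi
    have hcast : (i:ℝ) ≤ N := Nat.cast_le.2 hi
    have : (i:ℝ) * Δ ≤ N * Δ := mul_le_mul_of_nonneg_right hcast hΔ.le
    have hNΔ : (N:ℝ) * Δ = b - a := by rw [hΔdef]; field_simp
    simp only [hpdef]; linarith
  -- interval integrability on each subinterval
  have hbig := intervalIntegrable_integrand hC x ha hab.le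
  have hint : ∀ i : ℕ, i < N →
      IntervalIntegrable (fun s : ℝ => Dplus f s x ^ 2 / (2 * s ^ 2)) volume (p i) (p (i+1)) := by
    intro i hi
    apply hbig.mono_set
    rw [Set.uIcc_of_le (hmono i).le, Set.uIcc_of_le hab.le]
    exact Set.Icc_subset_Icc (hage i) (hble (i+1) hi)
  -- the elementary quantity c i
  set c : ℕ → ℝ := fun i => 1 / (2 * p i) - 1 / (2 * p (i+1)) with hcdef
  have hc0 : ∀ i : ℕ, 0 ≤ c i := by
    intro i
    have : 1 / (2 * p (i+1)) ≤ 1 / (2 * p i) := by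
      apply one_div_le_one_div_of_le
      · linarith [hppos i]
      · linarith [(hmono i).le]
    simp only [hcdef]; linarith
  have hceq : ∀ i : ℕ, c i = Δ / (2 * p i * p (i+1)) := by
    intro i
    have h1 : p i ≠ 0 := ne_of_gt (hppos i)
    have h2 : p (i+1) ≠ 0 := ne_of_gt (hppos (i+1))
    have h3 := hstep i
    simp only [hcdef]
    rw [← h3]
    field_simp
  have hcbound : ∀ i : ℕ, i < N → c i ≤ Δ / (2 * a ^ 2) := by
    intro i hi
    rw [hceq i]
    apply div_le_div_of_nonneg_left hΔ.le (by positivity)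
    have h1 := hage i
    have h2 := hage (i+1)
    nlinarith
  -- integral bounds on each subinterval
  have hup : ∀ i : ℕ, i < N →
      (∫ s in p i..p (i+1), Dplus f s x ^ 2 / (2 * s ^ 2)) ≤
        Dplus f (p (i+1)) x ^ 2 * c i := by
    intro i hi
    have hmon := intervalIntegral.integral_mono_on (μ := volume) (hmono i).le (hint i hi)
      (intervalIntegrable_const_div_sq (K := Dplus f (p (i+1)) x ^ 2) (hppos i) (hmono i).le)
      (fun u hu => by
        have hu0 : 0 < u := lt_of_lt_of_le (hppos i) hu.1
        have hle : Dplus f u x ≤ Dplus f (p (i+1)) x := Dplus_mono hC hu0 hu.2 x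
        have hnn : 0 ≤ Dplus f u x := Dplus_nonneg hC hu0 x
        exact (div_le_div_iff_of_pos_right (by positivity)).2 (pow_le_pow_left₀ hnn hle 2))
    calc (∫ s in p i..p (i+1), Dplus f s x ^ 2 / (2 * s ^ 2))
        ≤ ∫ s in p i..p (i+1), Dplus f (p (i+1)) x ^ 2 / (2 * s ^ 2) := hmon
      _ = Dplus f (p (i+1)) x ^ 2 * c i := integral_const_div_sq (hppos i) (hmono i).le
  have hdown : ∀ i : ℕ, i < N →
      Dplus f (p i) x ^ 2 * c i ≤ ∫ s in p i..p (i+1), Dplus f s x ^ 2 / (2 * s ^ 2) := by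
    intro i hi
    have hmon := intervalIntegral.integral_mono_on (μ := volume) (hmono i).le
      (intervalIntegrable_const_div_sq (K := Dplus f (p i) x ^ 2) (hppos i) (hmono i).le)
      (hint i hi)
      (fun u hu => by
        have hu0 : 0 < u := lt_of_lt_of_le (hppos i) hu.1
        have hle : Dplus f (p i) x ≤ Dplus f u x := Dplus_mono hC (hppos i) hu.1 x
        have hnn : 0 ≤ Dplus f (p i) x := Dplus_nonneg hC (hppos i) x
        exact (div_le_div_iff_of_pos_right (by positivity)).2 (pow_le_pow_left₀ hnn hle 2))
    calc Dplus f (p i) x ^ 2 * c i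
        = ∫ s in p i..p (i+1), Dplus f (p i) x ^ 2 / (2 * s ^ 2) :=
          (integral_const_div_sq (hppos i) (hmono i).le).symm
      _ ≤ ∫ s in p i..p (i+1), Dplus f s x ^ 2 / (2 * s ^ 2) := hmon
  -- increment bounds
  have hgup : ∀ i : ℕ, i < N →
      ft f (p i) x - ft f (p (i+1)) x ≤ Dplus f (p (i+1)) x ^ 2 * c i := by
    intro i hi
    have h1 := ft_sub_le hC (hppos i) (hmono i).le x
    have hmm := Dminus_le_Dplus hC (hppos (i+1)) x
    have hmn := Dminus_nonneg hC (hppos (i+1)) x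
    have hsq : Dminus f (p (i+1)) x ^ 2 ≤ Dplus f (p (i+1)) x ^ 2 :=
      pow_le_pow_left₀ hmn hmm 2
    have hc := hc0 i
    simp only [hcdef] at *
    nlinarith
  have hgdown : ∀ i : ℕ, i < N →
      Dplus f (p i) x ^ 2 * c i ≤ ft f (p i) x - ft f (p (i+1)) x := by
    intro i hi
    have h1 := le_ft_sub hC (hppos i) (hmono i).le x
    simp only [hcdef] at *
    linarith
  -- sums
  have hIsum : I = ∑ i ∈ Finset.range N, ∫ s in p i..p (i+1), Dplus f s x ^ 2 / (2 * s ^ 2) := by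
    rw [intervalIntegral.sum_integral_adjacent_intervals hint, hp0, hpN]
  have hgsum : ft f a x - ft f b x =
      ∑ i ∈ Finset.range N, (ft f (p i) x - ft f (p (i+1)) x) := by
    rw [Finset.sum_range_sub' (fun i => ft f (p i) x) N, hp0, hpN]
  set A := ∑ i ∈ Finset.range N, Dplus f (p i) x ^ 2 * c i with hA
  set B := ∑ i ∈ Finset.range N, Dplus f (p (i+1)) x ^ 2 * c i with hB
  have hAI : A ≤ I := by
    rw [hIsum]
    exact Finset.sum_le_sum fun i hi => hdown i (Finset.mem_range.1 hi)
  have hIB : I ≤ B := by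
    rw [hIsum]
    exact Finset.sum_le_sum fun i hi => hup i (Finset.mem_range.1 hi)
  have hAg : A ≤ ft f a x - ft f b x := by
    rw [hgsum]
    exact Finset.sum_le_sum fun i hi => hgdown i (Finset.mem_range.1 hi)
  have hgB : ft f a x - ft f b x ≤ B := by
    rw [hgsum]
    exact Finset.sum_le_sum fun i hi => hgup i (Finset.mem_range.1 hi)
  have hBA : B - A ≤ ε := by
    have h1 : B - A = ∑ i ∈ Finset.range N,
        (Dplus f (p (i+1)) x ^ 2 - Dplus f (p i) x ^ 2) * c i := by
      rw [hA, hB, ← Finset.sum_sub_distrib]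
      exact Finset.sum_congr rfl fun i _ => by ring
    have h2 : ∀ i ∈ Finset.range N,
        (Dplus f (p (i+1)) x ^ 2 - Dplus f (p i) x ^ 2) * c i ≤
        (Dplus f (p (i+1)) x ^ 2 - Dplus f (p i) x ^ 2) * (Δ / (2 * a ^ 2)) := by
      intro i hi
      have hii := Finset.mem_range.1 hi
      have hdiff : 0 ≤ Dplus f (p (i+1)) x ^ 2 - Dplus f (p i) x ^ 2 := by
        have hle := Dplus_mono hC (hppos i) (hmono i).le x
        have hnn := Dplus_nonneg hC (hppos i) x
        nlinarith
      exact mul_le_mul_of_nonneg_left (hcbound i hii) hdiff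
    have h3 : ∑ i ∈ Finset.range N,
        (Dplus f (p (i+1)) x ^ 2 - Dplus f (p i) x ^ 2) * (Δ / (2 * a ^ 2)) =
        K * (Δ / (2 * a ^ 2)) := by
      rw [← Finset.sum_mul, Finset.sum_range_sub (fun i => Dplus f (p i) x ^ 2), hp0, hpN]
    have h4 : K * (Δ / (2 * a ^ 2)) ≤ ε := by
      rw [div_lt_iff₀ (by positivity : (0:ℝ) < 2 * a ^ 2 * ε)] at hN
      rw [hΔdef]
      rw [show K * ((b - a) / ↑N / (2 * a ^ 2)) = (b - a) * K / (↑N * (2 * a ^ 2)) by ring]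
      rw [div_le_iff₀ (by positivity)]
      nlinarith
    calc B - A ≤ K * (Δ / (2 * a ^ 2)) := by
          rw [h1]; rw [← h3]; exact Finset.sum_le_sum h2
      _ ≤ ε := h4
  rw [abs_le]
  constructor <;> linarith

end Partition


/-- For every `x ∈ X` and `t > 0`: `f_0(x) - f_t(x) = ∫₀ᵗ D⁺_s(x)²/(2s²) ds`, and the
integrand coincides with `D⁻_s(x)²/(2s²)` for all but countably many `s`. -/
theorem statement5 [CompleteSpace X] (hX : IsLengthSpace X)
    (f : X × X → ℝ) (hlsc : LowerSemicontinuous f)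
    (hbdd : ∃ C : ℝ, ∀ p : X × X, C ≤ f p)
    (hrev : ∀ x y z : X, f (x, y) + f (y, z) ≤ f (x, z))
    (x : X) (t : ℝ) (ht : 0 < t) :
    ENNReal.ofReal (ft f 0 x - ft f t x) =
      (∫⁻ s in Set.Ioc (0 : ℝ) t, ENNReal.ofReal (Dplus f s x ^ 2 / (2 * s ^ 2))) ∧
    Set.Countable { s : ℝ | 0 < s ∧ Dplus f s x ≠ Dminus f s x } := by
  obtain ⟨C, hC⟩ := hbdd
  have hne : Nonempty X := ⟨x⟩
  constructor
  · -- the integral identity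
    set φ : ℝ → ℝ≥0∞ := fun s => ENNReal.ofReal (Dplus f s x ^ 2 / (2 * s ^ 2)) with hφ
    set a : ℕ → ℝ := fun n => t / (n + 2) with hadef
    have hapos : ∀ n : ℕ, 0 < a n := fun n => by positivity
    have halt : ∀ n : ℕ, a n < t := by
      intro n
      simp only [hadef]
      rw [div_lt_iff₀ (by positivity)]
      nlinarith [Nat.cast_nonneg (α := ℝ) n]
    have hamono : ∀ {n m : ℕ}, n ≤ m → a m ≤ a n := by
      intro n m hnm
      simp only [hadef]
      have hcast : ((n:ℝ) + 2) ≤ ((m:ℝ) + 2) := by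
        have : (n:ℝ) ≤ m := Nat.cast_le.2 hnm
        linarith
      exact div_le_div_of_nonneg_left ht.le (by positivity) hcast
    have ha0 : Tendsto a atTop (𝓝 0) := by
      have h1 : Tendsto (fun n : ℕ => ((n:ℝ) + 2)) atTop atTop :=
        tendsto_atTop_add_const_right _ _ tendsto_natCast_atTop_atTop
      have h2 : Tendsto (fun n : ℕ => ((n:ℝ) + 2)⁻¹) atTop (𝓝 0) := h1.inv_tendsto_atTop
      have h3 : Tendsto (fun n : ℕ => t * ((n:ℝ) + 2)⁻¹) atTop (𝓝 (t * 0)) :=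
        tendsto_const_nhds.mul h2
      simpa [hadef, div_eq_mul_inv] using h3
    have step : ∀ n : ℕ, ENNReal.ofReal (ft f (a n) x - ft f t x) =
        ∫⁻ s in Set.Ioc (a n) t, φ s := by
      intro n
      have hreal : ft f (a n) x - ft f t x =
          ∫ s in Set.Ioc (a n) t, Dplus f s x ^ 2 / (2 * s ^ 2) := by
        rw [ft_diff_eq_integral hC x (hapos n) (halt n),
          intervalIntegral.integral_of_le (halt n).le]
      rw [hreal, ofReal_integral_eq_lintegral_ofReal
        (integrableOn_integrand hC x (hapos n) (halt n).le)
        (Filter.Eventually.of_forall fun s => integrand_nonneg x s)]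
    set u : ℕ → ℝ≥0∞ := fun n => ENNReal.ofReal (ft f (a n) x - ft f t x) with hu
    have hum : Monotone u := by
      intro n m hnm
      apply ENNReal.ofReal_le_ofReal
      have := ft_anti hC (hapos m) (hamono hnm) x
      linarith
    have hft0 : ft f 0 x = f (x, x) := if_pos rfl
    have htend1 : Tendsto (fun n => ft f (a n) x - ft f t x) atTop
        (𝓝 (ft f 0 x - ft f t x)) := by
      rw [hft0]
      exact (ft_tendsto_zero hC hlsc x hapos ha0).sub tendsto_const_nhds
    have htendL : Tendsto u atTop (𝓝 (ENNReal.ofReal (ft f 0 x - ft f t x))) :=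
      (ENNReal.continuous_ofReal.continuousAt).tendsto.comp htend1
    have key1 : (⨆ n, u n) = ENNReal.ofReal (ft f 0 x - ft f t x) :=
      tendsto_nhds_unique (tendsto_atTop_iSup hum) htendL
    -- monotone convergence on the right-hand side
    set F : ℕ → ℝ → ℝ≥0∞ := fun n => (Set.Ioc (a n) t).indicator φ with hF
    have hFmeas : ∀ n, Measurable (F n) := by
      intro n
      have hcongr : F n = (Set.Ioc (a n) t).indicator
          (fun s => ENNReal.ofReal (Dplus f (max s (a n)) x ^ 2 / (2 * s ^ 2))) := by
        apply Set.indicator_congr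
        intro s hs
        simp [hφ, max_eq_left hs.1.le]
      rw [hcongr]
      exact (ENNReal.measurable_ofReal.comp (aux_measurable hC x (hapos n))).indicator
        measurableSet_Ioc
    have hFmono : Monotone F := by
      intro n m hnm
      exact Set.indicator_le_indicator_of_subset
        (Set.Ioc_subset_Ioc_left (hamono hnm)) (fun _ => zero_le)
    have hFsup : ∀ s, (⨆ n, F n s) = (Set.Ioc (0:ℝ) t).indicator φ s := by
      intro s
      by_cases hs : s ∈ Set.Ioc (0:ℝ) t
      · rw [Set.indicator_of_mem hs]
        apply le_antisymm
        · exact iSup_le fun n => Set.indicator_le_self _ _ s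
        · obtain ⟨n, hn⟩ : ∃ n, a n < s := (ha0.eventually (eventually_lt_nhds hs.1)).exists
          have hmem : s ∈ Set.Ioc (a n) t := ⟨hn, hs.2⟩
          refine le_iSup_of_le n ?_
          simp only [hF]
          rw [Set.indicator_of_mem hmem]
      · rw [Set.indicator_of_notMem hs]
        refine le_antisymm (iSup_le fun n => ?_) zero_le
        have hmem : s ∉ Set.Ioc (a n) t := fun hmem => hs ⟨(hapos n).trans hmem.1, hmem.2⟩
        simp only [hF]
        rw [Set.indicator_of_notMem hmem]
    have h2 : (∫⁻ s in Set.Ioc (0:ℝ) t, φ s) = ⨆ n, ∫⁻ s in Set.Ioc (a n) t, φ s := by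
      rw [← lintegral_indicator measurableSet_Ioc]
      have hswap : (Set.Ioc (0:ℝ) t).indicator φ = fun s => ⨆ n, F n s :=
        funext fun s => (hFsup s).symm
      rw [hswap, lintegral_iSup hFmeas hFmono]
      refine iSup_congr fun n => ?_
      rw [hF]
      exact lintegral_indicator measurableSet_Ioc φ
    calc ENNReal.ofReal (ft f 0 x - ft f t x) = ⨆ n, u n := key1.symm
      _ = ⨆ n, ∫⁻ s in Set.Ioc (a n) t, φ s := iSup_congr fun n => step n
      _ = ∫⁻ s in Set.Ioc (0:ℝ) t, φ s := h2.symm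
  · -- countability of the exceptional set
    set S := { s : ℝ | 0 < s ∧ Dplus f s x ≠ Dminus f s x } with hS
    have hlt : ∀ s ∈ S, Dminus f s x < Dplus f s x := fun s hs =>
      lt_of_le_of_ne (Dminus_le_Dplus hC hs.1 x) (Ne.symm hs.2)
    have hexists : ∀ s ∈ S, ∃ q : ℚ, Dminus f s x < (q:ℝ) ∧ (q:ℝ) < Dplus f s x :=
      fun s hs => exists_rat_btwn (hlt s hs)
    classical
    set g : ℝ → ℚ := fun s =>
      if h : ∃ q : ℚ, Dminus f s x < (q:ℝ) ∧ (q:ℝ) < Dplus f s x then h.choose else 0 with hg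
    have hgspec : ∀ s ∈ S, Dminus f s x < (g s : ℝ) ∧ ((g s : ℝ)) < Dplus f s x := by
      intro s hs
      have h := hexists s hs
      simp only [hg, dif_pos h]
      exact h.choose_spec
    have hinj : Set.InjOn g S := by
      intro s hsS s' hs'S hgeq
      by_contra hne'
      rcases lt_or_gt_of_ne hne' with hlt' | hlt'
      · have h1 := (hgspec s hsS).2
        have h2 := (hgspec s' hs'S).1
        have h3 := Dplus_le_Dminus hC hsS.1 hlt' x
        rw [hgeq] at h1
        linarith
      · have h1 := (hgspec s' hs'S).2
        have h2 := (hgspec s hsS).1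
        have h3 := Dplus_le_Dminus hC hs'S.1 hlt' x
        rw [hgeq] at h2
        linarith
    exact (Set.mapsTo_univ g S).countable_of_injOn hinj Set.countable_univ
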